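/- Let ξ_n = (1/2) n^{−α}(1 + 2^{{α log₂ n}}) for n ≥ 1, where {·} denotes the fractional part. Then liminf_{n→∞} ξ_n/ξ_{n+1} = 1 and limsup_{n→∞} ξ_n/ξ_{n+1} = 3/2; in fact the set of limit points of the sequence (ξ_n/ξ_{n+1})_{n≥1} is exactly {1, 3/2}. Consequently, the piecewise linear Wang-type map built on the points ξ_n has no (one-sided) derivative at 0. -/

import Mathlib

open Set Filter Topology Real

private lemma st16_nonjump_arith {a b c ε : ℝ} (hb : 0 < b) (hc : 0 < c) (hε : 1 ≤ ε)
    (hab : a = ε * b) : 1 ≤ (a + c) / (b + c) ∧ (a + c) / (b + c) ≤ ε := by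
  have hba : b ≤ a := by nlinarith
  have hd : 0 < b + c := by linarith
  constructor
  · rw [le_div_iff₀ hd]; linarith
  · rw [div_le_iff₀ hd]; nlinarith

private lemma st16_jump_arith {a b c ε : ℝ} (hb : 0 < b) (hc : 0 < c) (hε : 1 ≤ ε)
    (hab : a = ε * b) (h1 : c/2 ≤ a) (h3 : b ≤ c/2) :
    3/2 ≤ (a + c) / (b + c/2) ∧ (a + c) / (b + c/2) ≤ ε * (ε + 2) / (1 + ε) := by
  have hd : 0 < b + c/2 := by linarith
  constructor
  · rw [le_div_iff₀ hd]; nlinarith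
  · rw [div_le_div_iff₀ hd (by linarith)]
    have hε2 : 1 ≤ ε^2 := by nlinarith
    nlinarith [mul_nonneg (by linarith : (0:ℝ) ≤ ε^2 - 1) hc.le]

-- dichotomy of floors
private lemma st16_dich {α : ℝ} (hα0 : 0 < α) (hα1 : α < 1) {n : ℕ} (hn : 1 ≤ n) :
    ⌊α * Real.logb 2 ((n+1:ℕ):ℝ)⌋ = ⌊α * Real.logb 2 (n:ℝ)⌋ ∨
    ⌊α * Real.logb 2 ((n+1:ℕ):ℝ)⌋ = ⌊α * Real.logb 2 (n:ℝ)⌋ + 1 := by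
  have hn0 : (0:ℝ) < (n:ℝ) := by exact_mod_cast hn
  have hn1 : (1:ℝ) ≤ (n:ℝ) := by exact_mod_cast hn
  have hmono : α * Real.logb 2 (n:ℝ) ≤ α * Real.logb 2 ((n+1:ℕ):ℝ) := by
    have : Real.logb 2 (n:ℝ) ≤ Real.logb 2 ((n+1:ℕ):ℝ) := by
      apply Real.logb_le_logb_of_le one_lt_two hn0
      push_cast; linarith
    nlinarith
  have hup : α * Real.logb 2 ((n+1:ℕ):ℝ) < α * Real.logb 2 (n:ℝ) + 1 := by
    have h2 : Real.logb 2 ((n+1:ℕ):ℝ) ≤ Real.logb 2 (2*(n:ℝ)) := by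
      apply Real.logb_le_logb_of_le one_lt_two (by push_cast; linarith)
      push_cast; linarith
    have h3 : Real.logb 2 (2*(n:ℝ)) = 1 + Real.logb 2 (n:ℝ) := by
      rw [Real.logb_mul two_ne_zero (ne_of_gt hn0), Real.logb_self_eq_one] <;> norm_num
    have h4 : 0 ≤ Real.logb 2 (n:ℝ) := Real.logb_nonneg one_lt_two (by exact_mod_cast hn)
    nlinarith
  have l1 : ⌊α * Real.logb 2 (n:ℝ)⌋ ≤ ⌊α * Real.logb 2 ((n+1:ℕ):ℝ)⌋ := Int.floor_le_floor hmono
  have l2 : ⌊α * Real.logb 2 ((n+1:ℕ):ℝ)⌋ < ⌊α * Real.logb 2 (n:ℝ)⌋ + 2 := by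
    have := Int.floor_le (α * Real.logb 2 ((n+1:ℕ):ℝ))
    have h5 := Int.lt_floor_add_one (α * Real.logb 2 (n:ℝ))
    have : (⌊α * Real.logb 2 ((n+1:ℕ):ℝ)⌋ : ℝ) < (⌊α * Real.logb 2 (n:ℝ)⌋ : ℝ) + 2 := by linarith
    exact_mod_cast this
  omega

-- doubling bound
private lemma st16_double {α : ℝ} (hα0 : 0 < α) (hα1 : α < 1) {m : ℕ} (hm : 1 ≤ m) :
    ⌊α * Real.logb 2 ((2*m:ℕ):ℝ)⌋ ≤ ⌊α * Real.logb 2 (m:ℝ)⌋ + 1 := by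
  have hm0 : (0:ℝ) < (m:ℝ) := by exact_mod_cast hm
  have h3 : Real.logb 2 ((2*m:ℕ):ℝ) = 1 + Real.logb 2 (m:ℝ) := by
    push_cast
    rw [Real.logb_mul two_ne_zero (ne_of_gt hm0), Real.logb_self_eq_one] <;> norm_num
  have h4 : 0 ≤ Real.logb 2 (m:ℝ) := Real.logb_nonneg one_lt_two (by exact_mod_cast hm)
  have h5 := Int.lt_floor_add_one (α * Real.logb 2 (m:ℝ))
  have h7 : α * Real.logb 2 ((2*m:ℕ):ℝ) = α + α * Real.logb 2 (m:ℝ) := by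
    rw [h3]; ring
  have h6 : (⌊α * Real.logb 2 ((2*m:ℕ):ℝ)⌋ : ℝ) ≤ α + α * Real.logb 2 (m:ℝ) := by
    rw [← h7]; exact Int.floor_le _
  have : (⌊α * Real.logb 2 ((2*m:ℕ):ℝ)⌋ : ℝ) < (⌊α * Real.logb 2 (m:ℝ)⌋ : ℝ) + 2 := by
    nlinarith
  have := (by exact_mod_cast this : ⌊α * Real.logb 2 ((2*m:ℕ):ℝ)⌋ < ⌊α * Real.logb 2 (m:ℝ)⌋ + 2)
  omega

noncomputable def st16g (α : ℝ) (m : ℕ) : ℝ :=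
  (m:ℝ)^(-α) + (2:ℝ)^(-(⌊α * Real.logb 2 (m:ℝ)⌋:ℝ))

noncomputable def st16e (α : ℝ) (n : ℕ) : ℝ := (((n:ℝ)+1)/(n:ℝ))^α

private lemma st16g_pos {α : ℝ} {n : ℕ} (hn : 1 ≤ n) : 0 < st16g α n := by
  have hn0 : (0:ℝ) < (n:ℝ) := by exact_mod_cast hn
  have := Real.rpow_pos_of_pos hn0 (-α)
  have := Real.rpow_pos_of_pos (two_pos : (0:ℝ) < 2) (-(⌊α * Real.logb 2 (n:ℝ)⌋:ℝ))
  unfold st16g; linarith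

private lemma st16e_one_le {α : ℝ} (hα0 : 0 < α) {n : ℕ} (hn : 1 ≤ n) : 1 ≤ st16e α n := by
  have hn0 : (0:ℝ) < (n:ℝ) := by exact_mod_cast hn
  have h1 : (1:ℝ) ≤ ((n:ℝ)+1)/(n:ℝ) := by rw [le_div_iff₀ hn0]; linarith
  calc (1:ℝ) = 1 ^ α := (Real.one_rpow α).symm
  _ ≤ st16e α n := Real.rpow_le_rpow zero_le_one h1 hα0.le

private lemma st16_ab {α : ℝ} {n : ℕ} (hn : 1 ≤ n) :
    ((n:ℝ))^(-α) = st16e α n * (((n+1:ℕ)):ℝ)^(-α) := by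
  have hn0 : (0:ℝ) < (n:ℝ) := by exact_mod_cast hn
  have hn1 : (0:ℝ) < (n:ℝ)+1 := by linarith
  have e1 : st16e α n = ((n:ℝ)+1)^α / (n:ℝ)^α := by unfold st16e; exact Real.div_rpow hn1.le hn0.le α
  have e2 : ((n:ℝ))^(-α) = ((n:ℝ)^α)⁻¹ := Real.rpow_neg hn0.le α
  have e3 : (((n+1:ℕ)):ℝ)^(-α) = (((n:ℝ)+1)^α)⁻¹ := by
    push_cast; exact Real.rpow_neg hn1.le α
  have p1 : (0:ℝ) < (n:ℝ)^α := Real.rpow_pos_of_pos hn0 α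
  have p2 : (0:ℝ) < ((n:ℝ)+1)^α := Real.rpow_pos_of_pos hn1 α
  rw [e1, e2, e3]
  field_simp

private lemma st16_base' {α : ℝ} {n : ℕ} (hn : 1 ≤ n) :
    (n : ℝ) ^ (-α) = (2:ℝ) ^ (-(α * Real.logb 2 (n:ℝ))) := by
  have hn0 : (0:ℝ) < (n:ℝ) := by exact_mod_cast hn
  conv_lhs => rw [← Real.rpow_logb two_pos (by norm_num) hn0]
  rw [← Real.rpow_mul (le_of_lt two_pos)]
  congr 1
  ring

private lemma st16_bounds' {α : ℝ} {n : ℕ} (hn : 1 ≤ n) :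
    (n : ℝ) ^ (-α) ≤ (2:ℝ) ^ (-(⌊α * Real.logb 2 (n:ℝ)⌋ : ℝ)) ∧
    (2:ℝ) ^ (-(⌊α * Real.logb 2 (n:ℝ)⌋ : ℝ)) < 2 * (n : ℝ) ^ (-α) := by
  set x := α * Real.logb 2 (n:ℝ) with hx
  rw [st16_base' hn, ← hx]
  constructor
  · exact Real.rpow_le_rpow_of_exponent_le one_le_two (by simpa using Int.floor_le x)
  · have h : (2:ℝ) ^ (-(⌊x⌋:ℝ)) < (2:ℝ) ^ (1 + -x) :=
      Real.rpow_lt_rpow_of_exponent_lt one_lt_two (by nlinarith [Int.lt_floor_add_one x])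
    calc (2:ℝ) ^ (-(⌊x⌋:ℝ)) < (2:ℝ) ^ (1 + -x) := h
    _ = 2 * (2:ℝ)^(-x) := by rw [Real.rpow_add two_pos]; simp

private lemma st16_nonjump_arith' {a b c ε : ℝ} (hb : 0 < b) (hc : 0 < c) (hε : 1 ≤ ε)
    (hab : a = ε * b) : 1 ≤ (a + c) / (b + c) ∧ (a + c) / (b + c) ≤ ε := by
  have hba : b ≤ a := by nlinarith
  have hd : 0 < b + c := by linarith
  constructor
  · rw [le_div_iff₀ hd]; linarith
  · rw [div_le_iff₀ hd]; nlinarith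

private lemma st16_jump_arith' {a b c ε : ℝ} (hb : 0 < b) (hc : 0 < c) (hε : 1 ≤ ε)
    (hab : a = ε * b) (h1 : c/2 ≤ a) (h3 : b ≤ c/2) :
    3/2 ≤ (a + c) / (b + c/2) ∧ (a + c) / (b + c/2) ≤ ε * (ε + 2) / (1 + ε) := by
  have hd : 0 < b + c/2 := by linarith
  constructor
  · rw [le_div_iff₀ hd]; nlinarith
  · rw [div_le_div_iff₀ hd (by linarith)]
    have hε2 : 1 ≤ ε^2 := by nlinarith
    nlinarith [mul_nonneg (by linarith : (0:ℝ) ≤ ε^2 - 1) hc.le]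

lemma st16_ratio {α : ℝ} (hα0 : 0 < α) (hα1 : α < 1) {n : ℕ} (hn : 1 ≤ n) :
    (⌊α * Real.logb 2 ((n+1:ℕ):ℝ)⌋ = ⌊α * Real.logb 2 (n:ℝ)⌋ →
      1 ≤ st16g α n / st16g α (n+1) ∧ st16g α n / st16g α (n+1) ≤ st16e α n) ∧
    (⌊α * Real.logb 2 ((n+1:ℕ):ℝ)⌋ = ⌊α * Real.logb 2 (n:ℝ)⌋ + 1 →
      3/2 ≤ st16g α n / st16g α (n+1) ∧
      st16g α n / st16g α (n+1) ≤ st16e α n * (st16e α n + 2) / (1 + st16e α n)) := by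
  have hn1 : 1 ≤ n + 1 := by omega
  set a := (n:ℝ)^(-α) with ha
  set b := (((n+1:ℕ)):ℝ)^(-α) with hbdef
  set c := (2:ℝ)^(-(⌊α * Real.logb 2 (n:ℝ)⌋:ℝ)) with hcdef
  have hb : 0 < b := Real.rpow_pos_of_pos (by exact_mod_cast hn1) (-α)
  have hboundn := st16_bounds' (α := α) hn
  have hboundn1 := st16_bounds' (α := α) hn1
  have hc : 0 < c := Real.rpow_pos_of_pos two_pos _
  have hab : a = st16e α n * b := st16_ab hn
  have he : 1 ≤ st16e α n := st16e_one_le hα0 hn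
  constructor
  · intro h
    have hc' : (2:ℝ)^(-(⌊α * Real.logb 2 ((n+1:ℕ):ℝ)⌋:ℝ)) = c := by rw [h]
    have hg1 : st16g α n = a + c := rfl
    have hg2 : st16g α (n+1) = b + c := by rw [st16g, hc']
    rw [hg1, hg2]
    exact st16_nonjump_arith' hb hc he hab
  · intro h
    have hc' : (2:ℝ)^(-(⌊α * Real.logb 2 ((n+1:ℕ):ℝ)⌋:ℝ)) = c/2 := by
      have : (-(⌊α * Real.logb 2 ((n+1:ℕ):ℝ)⌋:ℝ)) = (-(⌊α * Real.logb 2 (n:ℝ)⌋:ℝ)) + (-1) := by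
        rw [h]; push_cast; ring
      rw [this, Real.rpow_add two_pos, Real.rpow_neg_one, hcdef]
      ring
    have hg1 : st16g α n = a + c := rfl
    have hg2 : st16g α (n+1) = b + c/2 := by rw [st16g, hc']
    rw [hg1, hg2]
    exact st16_jump_arith' hb hc he hab (by linarith [hboundn.2]) (by linarith [hboundn1.1, le_of_eq hc'.symm])

lemma st16_nonjump_freq {α : ℝ} (hα0 : 0 < α) (hα1 : α < 1) (N : ℕ) :
    ∃ n, N ≤ n ∧ 1 ≤ n ∧ ⌊α * Real.logb 2 ((n+1:ℕ):ℝ)⌋ = ⌊α * Real.logb 2 (n:ℝ)⌋ := by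
  by_contra h
  push_neg at h
  set m := max N 2 with hm
  have hm2 : 2 ≤ m := le_max_right _ _
  have hmN : N ≤ m := le_max_left _ _
  have hjump : ∀ n, m ≤ n → ⌊α * Real.logb 2 ((n+1:ℕ):ℝ)⌋ = ⌊α * Real.logb 2 (n:ℝ)⌋ + 1 := by
    intro n hn
    have h1 : 1 ≤ n := by omega
    have hd := st16_dich hα0 hα1 h1
    rcases hd with h' | h'
    · exact absurd h' (h n (by omega) h1)
    · exact h'
  have hstep : ∀ t : ℕ, ⌊α * Real.logb 2 ((m+t:ℕ):ℝ)⌋ = ⌊α * Real.logb 2 (m:ℝ)⌋ + t := by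
    intro t
    induction t with
    | zero => simp
    | succ s ih =>
      have he : (m + (s+1) : ℕ) = (m + s) + 1 := by omega
      rw [he, hjump (m+s) (by omega), ih]
      push_cast; ring
  have hdouble := st16_double hα0 hα1 (by omega : 1 ≤ m)
  have h2m : (2*m : ℕ) = m + m := by omega
  rw [h2m, hstep m] at hdouble
  omega

lemma st16_jump_freq {α : ℝ} (hα0 : 0 < α) (hα1 : α < 1) (N : ℕ) :
    ∃ n, N ≤ n ∧ 1 ≤ n ∧ ⌊α * Real.logb 2 ((n+1:ℕ):ℝ)⌋ = ⌊α * Real.logb 2 (n:ℝ)⌋ + 1 := by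
  by_contra h
  push_neg at h
  set M := max N 1 with hM
  have hM1 : 1 ≤ M := le_max_right _ _
  have hconst : ∀ t : ℕ, ⌊α * Real.logb 2 ((M+t:ℕ):ℝ)⌋ = ⌊α * Real.logb 2 (M:ℝ)⌋ := by
    intro t
    induction t with
    | zero => simp
    | succ s ih =>
      have he : (M + (s+1) : ℕ) = (M + s) + 1 := by omega
      rcases st16_dich hα0 hα1 (by omega : 1 ≤ M + s) with h' | h'
      · rw [he, h', ih]
      · exact absurd h' (h (M+s) (by omega) (by omega))
  have hlog : Tendsto (fun n : ℕ => α * Real.logb 2 (n:ℝ)) atTop atTop :=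
    Filter.Tendsto.const_mul_atTop hα0
      ((Real.tendsto_logb_atTop one_lt_two).comp tendsto_natCast_atTop_atTop)
  have hev := (hlog.eventually_ge_atTop ((⌊α * Real.logb 2 (M:ℝ)⌋ : ℝ) + 1)).and
    (eventually_ge_atTop M)
  obtain ⟨n, hn1, hn2⟩ := hev.exists
  obtain ⟨t, rfl⟩ := Nat.exists_eq_add_of_le hn2
  have hc := hconst t
  have hfl : (⌊α * Real.logb 2 (M:ℝ)⌋ : ℤ) + 1 ≤ ⌊α * Real.logb 2 ((M+t:ℕ):ℝ)⌋ := by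
    rw [Int.le_floor]; push_cast; exact_mod_cast hn1
  omega

lemma st16e_tendsto {α : ℝ} (hα0 : 0 < α) : Tendsto (st16e α) atTop (𝓝 1) := by
  have ha : Tendsto (fun n : ℕ => ((n:ℝ))⁻¹) atTop (𝓝 0) := by
    simpa using tendsto_one_div_atTop_nhds_zero_nat (𝕜 := ℝ)
  have h1 : Tendsto (fun n : ℕ => 1 + ((n:ℝ))⁻¹) atTop (𝓝 1) := by
    simpa using (tendsto_const_nhds (x := (1:ℝ)) (f := atTop)).add ha
  have h0 : Tendsto (fun n : ℕ => ((n:ℝ)+1)/(n:ℝ)) atTop (𝓝 1) := by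
    refine Tendsto.congr' ?_ h1
    filter_upwards [eventually_ge_atTop 1] with n hn
    have hn0 : (0:ℝ) < (n:ℝ) := by exact_mod_cast hn
    field_simp
  have h2 := (Real.continuousAt_rpow_const 1 α (Or.inl one_ne_zero)).tendsto.comp h0
  rw [Real.one_rpow] at h2
  unfold st16e
  exact h2

lemma st16B_tendsto {α : ℝ} (hα0 : 0 < α) :
    Tendsto (fun n => st16e α n * (st16e α n + 2) / (1 + st16e α n)) atTop (𝓝 (3/2)) := by
  have h := st16e_tendsto hα0
  have h2 : Tendsto (fun n : ℕ => st16e α n * (st16e α n + 2) / (1 + st16e α n)) atTop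
      (𝓝 (1 * (1+2) / (1+1))) :=
    Filter.Tendsto.div (h.mul (h.add (tendsto_const_nhds (x := (2:ℝ)))))
      ((tendsto_const_nhds (x := (1:ℝ))).add h) (by norm_num)
  norm_num at h2
  exact h2

private lemma st16_key {α : ℝ} {n : ℕ} (hn : 1 ≤ n) :
    (1/2) * (n : ℝ) ^ (-α) * (1 + (2 : ℝ) ^ Int.fract (α * Real.logb 2 (n : ℝ))) =
    st16g α n / 2 := by
  set x := α * Real.logb 2 (n:ℝ) with hx
  have h1 : (2:ℝ) ^ Int.fract x = (2:ℝ)^x * (2:ℝ)^(-(⌊x⌋:ℝ)) := by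
    rw [Int.fract, sub_eq_add_neg, Real.rpow_add two_pos]
  have h2 : (2:ℝ)^(-x) * (2:ℝ)^x = 1 := by
    rw [← Real.rpow_add two_pos]; simp
  have hg : st16g α n = (n : ℝ) ^ (-α) + (2:ℝ) ^ (-(⌊x⌋:ℝ)) := rfl
  rw [hg, h1, st16_base' hn, ← hx]
  linear_combination ((1/2) * (2:ℝ)^(-(⌊x⌋:ℝ))) * h2

theorem stmt_16 (α : ℝ) (hα0 : 0 < α) (hα1 : α < 1)
    (ξ : ℕ → ℝ) (hξ0 : ξ 0 = 1)
    (hξ : ∀ n : ℕ, 1 ≤ n → ξ n =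
      (1/2) * (n : ℝ) ^ (-α) * (1 + (2 : ℝ) ^ Int.fract (α * Real.logb 2 (n : ℝ))))
    (T : ℝ → ℝ)
    (hT : ∀ n : ℕ, 1 ≤ n → ∀ x ∈ Set.Icc (ξ (n + 1)) (ξ n),
      T x = ((ξ n - x) * ξ n + (x - ξ (n + 1)) * ξ (n - 1)) / (ξ n - ξ (n + 1))) :
    Filter.liminf (fun n : ℕ => ξ n / ξ (n + 1)) Filter.atTop = 1 ∧
    Filter.limsup (fun n : ℕ => ξ n / ξ (n + 1)) Filter.atTop = 3 / 2 ∧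
    {L : ℝ | MapClusterPt L Filter.atTop (fun n : ℕ => ξ n / ξ (n + 1))} = {1, 3 / 2} ∧
    ¬ ∃ L : ℝ, Filter.Tendsto (fun x => T x / x) (nhdsWithin 0 (Set.Ioi 0)) (nhds L) := by
  have hξg : ∀ n : ℕ, 1 ≤ n → ξ n = st16g α n / 2 := by
    intro n hn; rw [hξ n hn, st16_key hn]
  have hgpos : ∀ n : ℕ, 1 ≤ n → 0 < st16g α n := fun n hn => st16g_pos hn
  have hξpos : ∀ n : ℕ, 1 ≤ n → 0 < ξ n := by
    intro n hn; rw [hξg n hn]; have := hgpos n hn; linarith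
  have hu : ∀ n : ℕ, 1 ≤ n → ξ n / ξ (n+1) = st16g α n / st16g α (n+1) := by
    intro n hn
    have h2 := (hgpos (n+1) (by omega)).ne'
    rw [hξg n hn, hξg (n+1) (by omega)]
    field_simp
  -- the eventual two-box bound
  have hbox : ∀ δ : ℝ, 0 < δ → ∀ᶠ n in Filter.atTop,
      (1 ≤ ξ n / ξ (n+1) ∧ ξ n / ξ (n+1) ≤ 1 + δ) ∨
      (3/2 ≤ ξ n / ξ (n+1) ∧ ξ n / ξ (n+1) ≤ 3/2 + δ) := by
    intro δ hδ
    have hεev : ∀ᶠ n in Filter.atTop, st16e α n ≤ 1 + δ :=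
      (st16e_tendsto hα0).eventually (eventually_le_nhds (by linarith))
    have hBev : ∀ᶠ n in Filter.atTop,
        st16e α n * (st16e α n + 2) / (1 + st16e α n) ≤ 3/2 + δ :=
      (st16B_tendsto hα0).eventually (eventually_le_nhds (by linarith))
    filter_upwards [hεev, hBev, eventually_ge_atTop 1] with n h1 h2 h3
    have hr := st16_ratio hα0 hα1 h3
    rw [hu n h3]
    rcases st16_dich hα0 hα1 h3 with hd | hd
    · left; obtain ⟨ha, hb⟩ := hr.1 hd; exact ⟨ha, by linarith⟩
    · right; obtain ⟨ha, hb⟩ := hr.2 hd; exact ⟨ha, by linarith⟩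
  have hev_ge1 : ∀ᶠ n in Filter.atTop, 1 ≤ ξ n / ξ (n+1) := by
    filter_upwards [hbox 1 one_pos] with n h
    rcases h with ⟨h, _⟩ | ⟨h, _⟩ <;> linarith
  have hev_le2 : ∀ᶠ n in Filter.atTop, ξ n / ξ (n+1) ≤ 2 := by
    filter_upwards [hbox (1/2) (by norm_num)] with n h
    rcases h with ⟨_, h⟩ | ⟨_, h⟩ <;> linarith
  have hbdd_le : Filter.IsBoundedUnder (· ≤ ·) Filter.atTop (fun n : ℕ => ξ n / ξ (n+1)) :=
    ⟨2, by simpa [Filter.eventually_map] using hev_le2⟩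
  have hbdd_ge : Filter.IsBoundedUnder (· ≥ ·) Filter.atTop (fun n : ℕ => ξ n / ξ (n+1)) :=
    ⟨1, by simpa [Filter.eventually_map] using hev_ge1⟩
  -- frequent nonjumps and jumps
  have hfr_nonjump : ∃ᶠ n in Filter.atTop, 1 ≤ n ∧
      ⌊α * Real.logb 2 ((n+1:ℕ):ℝ)⌋ = ⌊α * Real.logb 2 (n:ℝ)⌋ := by
    rw [frequently_atTop]
    intro N
    obtain ⟨n, h1, h2, h3⟩ := st16_nonjump_freq hα0 hα1 N
    exact ⟨n, h1, h2, h3⟩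
  have hfr_jump : ∃ᶠ n in Filter.atTop, 1 ≤ n ∧
      ⌊α * Real.logb 2 ((n+1:ℕ):ℝ)⌋ = ⌊α * Real.logb 2 (n:ℝ)⌋ + 1 := by
    rw [frequently_atTop]
    intro N
    obtain ⟨n, h1, h2, h3⟩ := st16_jump_freq hα0 hα1 N
    exact ⟨n, h1, h2, h3⟩
  -- cluster points
  have hmcp1 : MapClusterPt 1 Filter.atTop (fun n : ℕ => ξ n / ξ (n + 1)) := by
    rw [mapClusterPt_iff_frequently]
    intro s hs
    obtain ⟨ε', hε', hball⟩ := Metric.mem_nhds_iff.1 hs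
    have hεev : ∀ᶠ n in Filter.atTop, st16e α n < 1 + ε' :=
      (st16e_tendsto hα0).eventually (eventually_lt_nhds (by linarith))
    refine (hfr_nonjump.and_eventually hεev).mono ?_
    rintro n ⟨⟨hn1, hd⟩, hε⟩
    apply hball
    have hr := (st16_ratio hα0 hα1 hn1).1 hd
    rw [Metric.mem_ball, Real.dist_eq]
    rw [hu n hn1]
    rw [abs_lt]
    constructor <;> [linarith [hr.1]; linarith [hr.2]]
  have hmcp32 : MapClusterPt (3/2) Filter.atTop (fun n : ℕ => ξ n / ξ (n + 1)) := by
    rw [mapClusterPt_iff_frequently]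
    intro s hs
    obtain ⟨ε', hε', hball⟩ := Metric.mem_nhds_iff.1 hs
    have hBev : ∀ᶠ n in Filter.atTop,
        st16e α n * (st16e α n + 2) / (1 + st16e α n) < 3/2 + ε' :=
      (st16B_tendsto hα0).eventually (eventually_lt_nhds (by linarith))
    refine (hfr_jump.and_eventually hBev).mono ?_
    rintro n ⟨⟨hn1, hd⟩, hB⟩
    apply hball
    have hr := (st16_ratio hα0 hα1 hn1).2 hd
    rw [Metric.mem_ball, Real.dist_eq, hu n hn1, abs_lt]
    constructor <;> [linarith [hr.1]; linarith [hr.2]]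
  -- liminf
  have hliminf : Filter.liminf (fun n : ℕ => ξ n / ξ (n + 1)) Filter.atTop = 1 := by
    apply le_antisymm
    · apply le_of_forall_pos_le_add
      intro δ hδ
      apply Filter.liminf_le_of_frequently_le _ hbdd_ge
      have hεev : ∀ᶠ n in Filter.atTop, st16e α n ≤ 1 + δ :=
        (st16e_tendsto hα0).eventually (eventually_le_nhds (by linarith))
      refine (hfr_nonjump.and_eventually hεev).mono ?_
      rintro n ⟨⟨hn1, hd⟩, hε⟩
      have hr := (st16_ratio hα0 hα1 hn1).1 hd
      rw [hu n hn1]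
      linarith [hr.2]
    · exact Filter.le_liminf_of_le (hbdd_le.isCoboundedUnder_ge) hev_ge1
  -- limsup
  have hlimsup : Filter.limsup (fun n : ℕ => ξ n / ξ (n + 1)) Filter.atTop = 3/2 := by
    apply le_antisymm
    · apply le_of_forall_pos_le_add
      intro δ hδ
      apply Filter.limsup_le_of_le (hbdd_ge.isCoboundedUnder_le)
      filter_upwards [hbox δ hδ] with n h
      rcases h with ⟨_, h⟩ | ⟨_, h⟩ <;> linarith
    · apply Filter.le_limsup_of_frequently_le _ hbdd_le
      refine hfr_jump.mono ?_
      rintro n ⟨hn1, hd⟩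
      have hr := (st16_ratio hα0 hα1 hn1).2 hd
      rw [hu n hn1]
      exact hr.1
  -- cluster set
  have hset : {L : ℝ | MapClusterPt L Filter.atTop (fun n : ℕ => ξ n / ξ (n + 1))} = {1, 3/2} := by
    ext L
    simp only [Set.mem_setOf_eq, Set.mem_insert_iff, Set.mem_singleton_iff]
    constructor
    · intro hL
      by_contra hne
      push_neg at hne
      obtain ⟨h1ne, h2ne⟩ := hne
      have ha1 : 0 < |L - 1| := abs_pos.2 (sub_ne_zero.2 h1ne)
      have ha2 : 0 < |L - 3/2| := abs_pos.2 (sub_ne_zero.2 h2ne)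
      set δ := min |L - 1| |L - 3/2| / 3 with hδdef
      have hδ : 0 < δ := by
        apply div_pos _ (by norm_num)
        exact lt_min ha1 ha2
      have hfr := (mapClusterPt_iff_frequently.1 hL) (Metric.ball L δ) (Metric.ball_mem_nhds L hδ)
      obtain ⟨n, hmem, hb⟩ := (hfr.and_eventually (hbox δ hδ)).exists
      rw [Metric.mem_ball, Real.dist_eq] at hmem
      rcases hb with ⟨hl, hr⟩ | ⟨hl, hr⟩
      · have habs : |ξ n / ξ (n+1) - 1| ≤ δ := abs_le.2 ⟨by linarith, by linarith⟩
        have h3 : |L - 1| ≤ |L - ξ n / ξ (n+1)| + |ξ n / ξ (n+1) - 1| := abs_sub_le _ _ _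
        rw [abs_sub_comm L (ξ n / ξ (n+1))] at h3
        have h4 : 3 * δ ≤ |L - 1| := by
          rw [hδdef]
          linarith [min_le_left |L - 1| |L - 3/2|]
        linarith
      · have habs : |ξ n / ξ (n+1) - 3/2| ≤ δ := abs_le.2 ⟨by linarith, by linarith⟩
        have h3 : |L - 3/2| ≤ |L - ξ n / ξ (n+1)| + |ξ n / ξ (n+1) - 3/2| := abs_sub_le _ _ _
        rw [abs_sub_comm L (ξ n / ξ (n+1))] at h3
        have h4 : 3 * δ ≤ |L - 3/2| := by
          rw [hδdef]
          linarith [min_le_right |L - 1| |L - 3/2|]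
        linarith
    · rintro (rfl | rfl)
      · exact hmcp1
      · exact hmcp32
  refine ⟨hliminf, hlimsup, hset, ?_⟩
  rintro ⟨L, hL⟩
  -- strict monotonicity
  have hlt : ∀ n : ℕ, 1 ≤ n → ξ (n+1) < ξ n := by
    intro n hn
    have hn0 : (0:ℝ) < (n:ℝ) := by exact_mod_cast hn
    rw [hξg n hn, hξg (n+1) (by omega)]
    have hba : (((n+1:ℕ)):ℝ)^(-α) < (n:ℝ)^(-α) := by
      have h1 : (n:ℝ)^α < ((n:ℝ)+1)^α := Real.rpow_lt_rpow hn0.le (by linarith) hα0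
      have e2 : ((n:ℝ))^(-α) = ((n:ℝ)^α)⁻¹ := Real.rpow_neg hn0.le α
      have e3 : (((n+1:ℕ)):ℝ)^(-α) = (((n:ℝ)+1)^α)⁻¹ := by
        push_cast; exact Real.rpow_neg (by linarith) α
      rw [e2, e3]
      have p1 : (0:ℝ) < (n:ℝ)^α := Real.rpow_pos_of_pos hn0 α
      exact inv_strictAnti₀ p1 h1
    have hcc : (2:ℝ)^(-(⌊α * Real.logb 2 ((n+1:ℕ):ℝ)⌋:ℝ)) ≤
        (2:ℝ)^(-(⌊α * Real.logb 2 (n:ℝ)⌋:ℝ)) := by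
      apply Real.rpow_le_rpow_of_exponent_le one_le_two
      rcases st16_dich hα0 hα1 hn with hd | hd <;> rw [hd] <;> push_cast <;> linarith
    have hg1 : st16g α n = (n:ℝ)^(-α) + (2:ℝ)^(-(⌊α * Real.logb 2 (n:ℝ)⌋:ℝ)) := rfl
    have hg2 : st16g α (n+1) = (((n+1:ℕ)):ℝ)^(-α) +
        (2:ℝ)^(-(⌊α * Real.logb 2 ((n+1:ℕ):ℝ)⌋:ℝ)) := rfl
    rw [hg1, hg2]
    have := hba
    linarith
  -- T at the nodes
  have hT1 : ∀ n : ℕ, 1 ≤ n → T (ξ (n+1)) = ξ n := by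
    intro n hn
    have h := hT n hn (ξ (n+1)) ⟨le_refl _, (hlt n hn).le⟩
    have hne : ξ n - ξ (n+1) ≠ 0 := sub_ne_zero.2 (hlt n hn).ne'
    rw [h, sub_self, zero_mul, add_zero]
    exact mul_div_cancel_left₀ _ hne
  -- ξ → 0
  have hto0 : Filter.Tendsto ξ Filter.atTop (nhds 0) := by
    apply squeeze_zero' (g := fun n : ℕ => (3/2) * (n:ℝ)^(-α))
    · filter_upwards [eventually_ge_atTop 1] with n hn
      exact (hξpos n hn).le
    · filter_upwards [eventually_ge_atTop 1] with n hn
      rw [hξg n hn]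
      have hb := st16_bounds' (α := α) hn
      have hg1 : st16g α n = (n:ℝ)^(-α) + (2:ℝ)^(-(⌊α * Real.logb 2 (n:ℝ)⌋:ℝ)) := rfl
      rw [hg1]
      linarith [hb.2]
    · have h1 : Filter.Tendsto (fun n : ℕ => ((n:ℝ))^(-α)) Filter.atTop (nhds 0) :=
        (tendsto_rpow_neg_atTop hα0).comp tendsto_natCast_atTop_atTop
      have := h1.const_mul (3/2 : ℝ)
      simpa using this
  have hmem : Filter.Tendsto (fun n : ℕ => ξ (n+1)) Filter.atTop (nhdsWithin 0 (Set.Ioi 0)) := by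
    rw [tendsto_nhdsWithin_iff]
    constructor
    · exact hto0.comp (tendsto_add_atTop_nat 1)
    · exact Filter.Eventually.of_forall (fun n => hξpos (n+1) (by omega))
  have hcomp : Filter.Tendsto (fun n : ℕ => T (ξ (n+1)) / ξ (n+1)) Filter.atTop (nhds L) :=
    hL.comp hmem
  have htu : Filter.Tendsto (fun n : ℕ => ξ n / ξ (n+1)) Filter.atTop (nhds L) := by
    refine Filter.Tendsto.congr' ?_ hcomp
    filter_upwards [eventually_ge_atTop 1] with n hn
    rw [hT1 n hn]
  have hle : Filter.map (fun n : ℕ => ξ n / ξ (n+1)) Filter.atTop ≤ nhds L := htu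
  have e1 : (1:ℝ) = L := eq_of_nhds_neBot (hmcp1.clusterPt.mono hle)
  have e2 : (3/2:ℝ) = L := eq_of_nhds_neBot (hmcp32.clusterPt.mono hle)
  rw [← e1] at e2
  norm_num at e2
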